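/- Let d ≥ 2 be an integer, β > (d+1)/2 real, A > 0 and T < 4A² + 2β. Then (c'_{d,β}/(2β)^{d/2}) · (π^{(d−1)/2}/Γ((d+1)/2)) · A^{d−1} · ∫_{−∞}^{T−4A²} (1 − s/(2β))^{−β} ds > (A^{d−1} / ((2(d+1))^{d/2} √π Γ((d+1)/2))) · e^{T/2 − 2A²}. -/

import Mathlib

open MeasureTheory

section AuxLemmas
open Real Set Filter

lemma ptwise (β u : ℝ) (hβ : 1 < β) (hu : u < 2*β) (x : ℝ) (hx : x ∈ Ioi (-u)) :
    Real.exp (-x/2) ≤ (1 - (-x)/(2*β)) ^ (-β) := by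
  have hβ0 : (0:ℝ) < β := by linarith
  have hb : 0 < 1 - (-x)/(2*β) := by
    rw [sub_pos, div_lt_one (by linarith)]
    have := hx.out
    linarith
  rw [Real.rpow_def_of_pos hb, Real.exp_le_exp]
  have hlog := Real.log_le_sub_one_of_pos hb
  have h2 : β * Real.log (1 - (-x)/(2*β)) ≤ β * ((1 - (-x)/(2*β)) - 1) :=
    mul_le_mul_of_nonneg_left hlog hβ0.le
  have h3 : β * ((1 - (-x)/(2*β)) - 1) = x/2 := by field_simp; ring
  nlinarith [h2, h3]

lemma integral_lb (β u : ℝ) (hβ : 1 < β) (hu : u < 2*β) :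
    2 * Real.exp (u/2) ≤ ∫ s in Set.Iic u, (1 - s/(2*β)) ^ (-β) := by
  have hβ0 : (0:ℝ) < β := by linarith
  have h2β : (0:ℝ) < 2*β := by linarith
  rw [show Set.Iic u = Set.Iic (-(-u)) by simp,
    ← integral_comp_neg_Ioi (-u) (fun s => (1 - s/(2*β)) ^ (-β))]
  -- derivative setup
  have hderiv : ∀ x ∈ Ici (-u),
      HasDerivAt (fun y => -((2*β)/(β-1) * (1 - (-y)/(2*β)) ^ (1-β)))
        ((1 - (-x)/(2*β)) ^ (-β)) x := by
    intro x hx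
    have hb : 0 < 1 - (-x)/(2*β) := by
      rw [sub_pos, div_lt_one h2β]; have := hx.out; linarith
    have hi : HasDerivAt (fun y : ℝ => 1 - (-y)/(2*β)) (-(-1/(2*β))) x := by
      simpa using ((hasDerivAt_neg x).div_const (2*β)).const_sub 1
    have h1 := (hi.rpow_const (p := 1-β) (Or.inl hb.ne')).const_mul ((2*β)/(β-1))
    have h2 := h1.neg
    have hβ1 : β - 1 ≠ 0 := sub_ne_zero.mpr (by linarith)
    refine h2.congr_deriv ?_
    rw [show (1:ℝ) - β - 1 = -β by ring]
    generalize (1 - -x/(2*β)) ^ (-β) = E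
    field_simp
    ring
  have hnonneg : ∀ x ∈ Ioi (-u), (0:ℝ) ≤ (1 - (-x)/(2*β)) ^ (-β) := by
    intro x hx
    have hb : 0 < 1 - (-x)/(2*β) := by
      rw [sub_pos, div_lt_one h2β]; have := hx.out; linarith
    positivity
  have htend : Tendsto (fun y => -((2*β)/(β-1) * (1 - (-y)/(2*β)) ^ (1-β))) atTop (nhds 0) := by
    have h1 : Tendsto (fun y : ℝ => 1 - (-y)/(2*β)) atTop atTop := by
      have : Tendsto (fun y : ℝ => y/(2*β)) atTop atTop := tendsto_id.atTop_div_const h2β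
      have h2 := tendsto_atTop_add_const_left atTop 1 this
      apply h2.congr
      intro y; ring
    have h2 : Tendsto (fun t : ℝ => t ^ (-(β-1))) atTop (nhds 0) :=
      tendsto_rpow_neg_atTop (by linarith)
    have h3 := (h2.comp h1).const_mul ((2*β)/(β-1))
    rw [mul_zero] at h3
    have h4 := h3.neg
    rw [neg_zero] at h4
    apply h4.congr
    intro y
    simp only [Function.comp]
    rw [show -(β-1) = 1 - β by ring]
  have hInt : IntegrableOn (fun x => (1 - (-x)/(2*β)) ^ (-β)) (Ioi (-u)) :=
    integrableOn_Ioi_deriv_of_nonneg' hderiv hnonneg htend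
  -- exponential integral
  have hederiv : ∀ x ∈ Ici (-u),
      HasDerivAt (fun y => -(2 * Real.exp (-y/2))) (Real.exp (-x/2)) x := by
    intro x _
    have hi : HasDerivAt (fun y : ℝ => -y/2) (-1/2) x := by
      simpa using (hasDerivAt_neg x).div_const 2
    have := (hi.exp.const_mul (2:ℝ)).neg
    refine this.congr_deriv ?_
    ring
  have hetend : Tendsto (fun y => -(2 * Real.exp (-y/2))) atTop (nhds 0) := by
    have h1 : Tendsto (fun y : ℝ => -y/2) atTop atBot := by
      apply Tendsto.atBot_div_const (by norm_num : (0:ℝ) < 2) tendsto_neg_atTop_atBot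
    have h2 := (Real.tendsto_exp_atBot.comp h1).const_mul (2:ℝ)
    rw [mul_zero] at h2
    have h3 := h2.neg
    rw [neg_zero] at h3
    exact h3.congr (fun y => by simp [Function.comp])
  have heval : ∫ x in Ioi (-u), Real.exp (-x/2) = 2 * Real.exp (u/2) := by
    rw [integral_Ioi_of_hasDerivAt_of_nonneg' hederiv (fun x _ => (Real.exp_pos _).le) hetend]
    simp only [neg_neg]
    ring
  rw [← heval]
  apply integral_mono_of_nonneg
  · filter_upwards with x using (Real.exp_pos _).le
  · exact hInt
  · filter_upwards [ae_restrict_mem measurableSet_Ioi] with x hx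
    exact ptwise β u hβ hu x hx


lemma gamma_prod (x : ℝ) (hx : 0 < x) (k : ℕ) :
    Real.Gamma x * x ^ k ≤ Real.Gamma (x + k) := by
  induction k with
  | zero => simp
  | succ n ih =>
    have hxn : (0:ℝ) < x + n := by positivity
    have h1 : Real.Gamma (x + ((n+1:ℕ):ℝ)) = (x + n) * Real.Gamma (x + n) := by
      push_cast
      rw [show x + ((n:ℝ)+1) = (x + (n:ℝ)) + 1 by ring, Real.Gamma_add_one hxn.ne']
    rw [h1]
    calc Real.Gamma x * x ^ (n+1) = x * (Real.Gamma x * x ^ n) := by ring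
    _ ≤ x * Real.Gamma (x + n) := by
        apply mul_le_mul_of_nonneg_left ih hx.le
    _ ≤ (x + n) * Real.Gamma (x + n) := by
        apply mul_le_mul_of_nonneg_right (by linarith [Nat.cast_nonneg (α := ℝ) n])
          (Real.Gamma_pos_of_pos hxn).le

lemma wendel (x : ℝ) (hx : 0 < x) :
    x * Real.Gamma x ≤ Real.Gamma (x + 1/2) * Real.sqrt (x + 1/2) := by
  have h05 : (0:ℝ) < x + 1/2 := by linarith
  have hG5 : 0 < Real.Gamma (x + 1/2) := Real.Gamma_pos_of_pos h05
  have h15 : (0:ℝ) < x + 3/2 := by linarith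
  have hcv := Real.convexOn_log_Gamma.2 (Set.mem_Ioi.mpr h05) (Set.mem_Ioi.mpr h15)
    (by norm_num : (0:ℝ) ≤ (1:ℝ)/2) (by norm_num : (0:ℝ) ≤ (1:ℝ)/2) (by norm_num)
  simp only [Function.comp, smul_eq_mul] at hcv
  rw [show (1/2 : ℝ) * (x + 1/2) + 1/2 * (x + 3/2) = x + 1 by ring] at hcv
  have hΓ32 : Real.Gamma (x + 3/2) = (x + 1/2) * Real.Gamma (x + 1/2) := by
    rw [show x + 3/2 = (x + 1/2) + 1 by ring, Real.Gamma_add_one h05.ne']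
  rw [hΓ32, Real.log_mul h05.ne' hG5.ne'] at hcv
  have h1 : Real.Gamma (x + 1) = x * Real.Gamma x := Real.Gamma_add_one hx.ne'
  rw [h1] at hcv
  have hL : Real.log (x * Real.Gamma x) ≤
      Real.log (Real.Gamma (x + 1/2) * Real.sqrt (x + 1/2)) := by
    rw [Real.log_mul hG5.ne' (Real.sqrt_pos.mpr h05).ne', Real.log_sqrt h05.le]
    linarith
  have hxg : 0 < x * Real.Gamma x := mul_pos hx (Real.Gamma_pos_of_pos hx)
  exact (Real.log_le_log_iff hxg (by positivity)).mp hL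

lemma key_gamma (d : ℕ) (hd : 2 ≤ d) (β : ℝ) (hβ : ((d:ℝ)+1)/2 < β) :
    (β/((d:ℝ)+1)) ^ ((d:ℝ)/2) * Real.Gamma (β - (d:ℝ)/2) < 2 * Real.Gamma β := by
  have hd1 : (2:ℝ) ≤ (d:ℝ) := by exact_mod_cast hd
  have hβ0 : 0 < β := by linarith
  have hq : 0 < β/((d:ℝ)+1) := by positivity
  have hx : 0 < β - (d:ℝ)/2 := by linarith
  have hqx : β/((d:ℝ)+1) < β - (d:ℝ)/2 := by
    rw [div_lt_iff₀ (by linarith : (0:ℝ) < (d:ℝ)+1)]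
    nlinarith
  have hG : 0 < Real.Gamma (β - (d:ℝ)/2) := Real.Gamma_pos_of_pos hx
  rcases Nat.even_or_odd d with ⟨k, hk⟩ | ⟨k, hk⟩
  · -- d = 2k
    have hk1 : 1 ≤ k := by omega
    have hdk : (d:ℝ) = 2 * k := by rw [hk]; push_cast; ring
    have hd2 : (d:ℝ)/2 = (k:ℕ) := by rw [hdk]; ring
    rw [hd2]
    rw [Real.rpow_natCast]
    have hprod := gamma_prod (β - k) (by rw [← hd2]; exact hx) k
    rw [show β - (k:ℝ) + (k:ℕ) = β by push_cast; ring] at hprod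
    have hlt : (β/((d:ℝ)+1)) ^ (k:ℕ) < (β - (k:ℝ)) ^ (k:ℕ) := by
      apply pow_lt_pow_left₀ _ hq.le (by omega)
      rw [← hd2]; exact hqx
    calc (β/((d:ℝ)+1)) ^ (k:ℕ) * Real.Gamma (β - (k:ℝ))
        < (β - (k:ℝ)) ^ (k:ℕ) * Real.Gamma (β - (k:ℝ)) := by
          apply mul_lt_mul_of_pos_right hlt
          rw [← hd2]; exact hG
      _ = Real.Gamma (β - (k:ℝ)) * (β - (k:ℝ)) ^ (k:ℕ) := by ring
      _ ≤ Real.Gamma β := by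
          have : (0:ℝ) < β - k := by rw [← hd2]; exact hx
          simpa using gamma_prod (β - k) this k |>.trans_eq
            (by rw [show β - (k:ℝ) + (k:ℕ) = β by push_cast; ring])
      _ < 2 * Real.Gamma β := by
          have := Real.Gamma_pos_of_pos hβ0; linarith
  · -- d = 2k+1
    have hk1 : 1 ≤ k := by omega
    have hdk : (d:ℝ) = 2 * k + 1 := by rw [hk]; push_cast; ring
    have h3d : (3:ℝ) ≤ (d:ℝ) := by
      have : 3 ≤ d := by omega
      exact_mod_cast this
    have hβ2 : 2 ≤ β := by linarith
    have hd2 : (d:ℝ)/2 = (k:ℝ) + 1/2 := by rw [hdk]; ring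
    have hy0 : 0 < β - (d:ℝ)/2 := hx
    have h1 : Real.Gamma (β - (d:ℝ)/2) * (β - (d:ℝ)/2) ^ k ≤ Real.Gamma (β - 1/2) := by
      have := gamma_prod (β - (d:ℝ)/2) hy0 k
      rwa [show β - (d:ℝ)/2 + (k:ℝ) = β - 1/2 by rw [hd2]; ring] at this
    have hb5 : 0 < β - 1/2 := by linarith
    have h2 : (β - 1/2) * Real.Gamma (β - 1/2) ≤ Real.Gamma β * Real.sqrt β := by
      have := wendel (β - 1/2) hb5
      rwa [show β - 1/2 + 1/2 = β by ring] at this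
    have hs : Real.sqrt β ^ 2 = β := Real.sq_sqrt hβ0.le
    have hs0 : 0 < Real.sqrt β := Real.sqrt_pos.mpr hβ0
    have hq4 : β/((d:ℝ)+1) ≤ β/4 := by
      rw [div_le_div_iff₀ (by linarith) (by norm_num)]
      nlinarith [mul_nonneg hβ0.le (show (0:ℝ) ≤ (d:ℝ) - 3 by linarith)]
    have h3 : Real.sqrt (β/((d:ℝ)+1)) ≤ Real.sqrt β / 2 := by
      calc Real.sqrt (β/((d:ℝ)+1)) ≤ Real.sqrt (β/4) := Real.sqrt_le_sqrt hq4
        _ = Real.sqrt β / 2 := by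
            rw [Real.sqrt_div hβ0.le, show (4:ℝ) = 2^2 by norm_num,
              Real.sqrt_sq (by norm_num : (0:ℝ) ≤ 2)]
    have hrpow : (β/((d:ℝ)+1)) ^ ((d:ℝ)/2)
        = (β/((d:ℝ)+1))^k * Real.sqrt (β/((d:ℝ)+1)) := by
      rw [hd2, Real.rpow_add hq, Real.rpow_natCast, ← Real.sqrt_eq_rpow]
    rw [hrpow]
    have hqk : (β/((d:ℝ)+1))^k < (β - (d:ℝ)/2)^k :=
      pow_lt_pow_left₀ hqx hq.le (by omega)
    have step1 : (β/((d:ℝ)+1))^k * Real.sqrt (β/((d:ℝ)+1)) * Real.Gamma (β - (d:ℝ)/2)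
        < (β - (d:ℝ)/2)^k * (Real.sqrt β / 2) * Real.Gamma (β - (d:ℝ)/2) := by
      apply mul_lt_mul_of_pos_right _ hG
      exact mul_lt_mul hqk h3 (Real.sqrt_pos.mpr hq) (pow_nonneg hx.le k)
    have step3 : (Real.Gamma (β - (d:ℝ)/2) * (β - (d:ℝ)/2)^k) * (Real.sqrt β/2)
        ≤ Real.Gamma (β-1/2) * (Real.sqrt β/2) :=
      mul_le_mul_of_nonneg_right h1 (by positivity)
    have step4 : Real.Gamma (β-1/2) * (Real.sqrt β/2) ≤ 2 * Real.Gamma β := by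
      rw [← mul_le_mul_iff_right₀ (show (0:ℝ) < 2*(β-1/2) by linarith)]
      nlinarith [mul_le_mul_of_nonneg_right h2 hs0.le,
        Real.Gamma_pos_of_pos hb5, Real.Gamma_pos_of_pos hβ0,
        mul_pos (show (0:ℝ) < 3*β - 2 by linarith) (Real.Gamma_pos_of_pos hβ0)]
    nlinarith [step1, step3, step4]


end AuxLemmas

/-- The constant `c'_{d,β} = Γ(β)/(π^{d/2} Γ(β-d/2))`. -/
noncomputable def cPrime (d : ℕ) (β : ℝ) : ℝ :=
  Real.Gamma β / (Real.pi ^ ((d : ℝ) / 2) * Real.Gamma (β - (d : ℝ) / 2))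

/-- For `d ≥ 2`, `β > (d+1)/2`, `A > 0` and `T < 4A² + 2β`,
`(c'_{d,β}/(2β)^{d/2}) (π^{(d-1)/2}/Γ((d+1)/2)) A^{d-1} ∫_{-∞}^{T-4A²}(1-s/(2β))^{-β} ds
 > (A^{d-1}/((2(d+1))^{d/2} √π Γ((d+1)/2))) e^{T/2-2A²}`. -/
theorem stmt_7 (d : ℕ) (hd : 2 ≤ d) (β A T : ℝ)
    (hβ : ((d : ℝ) + 1) / 2 < β) (hA : 0 < A) (hT : T < 4 * A ^ 2 + 2 * β) :
    A ^ (d - 1) /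
        ((2 * ((d : ℝ) + 1)) ^ ((d : ℝ) / 2) * Real.sqrt Real.pi *
          Real.Gamma (((d : ℝ) + 1) / 2)) * Real.exp (T / 2 - 2 * A ^ 2)
      < cPrime d β / (2 * β) ^ ((d : ℝ) / 2) *
          (Real.pi ^ (((d : ℝ) - 1) / 2) / Real.Gamma (((d : ℝ) + 1) / 2)) *
          A ^ (d - 1) *
          ∫ s in Set.Iic (T - 4 * A ^ 2), (1 - s / (2 * β)) ^ (-β) := by
  have hd1 : (2:ℝ) ≤ (d:ℝ) := by exact_mod_cast hd
  have hβ1 : 1 < β := by linarith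
  have hβ0 : 0 < β := by linarith
  have hπ : 0 < Real.pi := Real.pi_pos
  have hsπ : 0 < Real.sqrt Real.pi := Real.sqrt_pos.mpr hπ
  have hΓp : 0 < Real.Gamma (((d : ℝ) + 1) / 2) := Real.Gamma_pos_of_pos (by linarith)
  have hGm : 0 < Real.Gamma (β - (d:ℝ)/2) := Real.Gamma_pos_of_pos (by linarith)
  have hGβ : 0 < Real.Gamma β := Real.Gamma_pos_of_pos hβ0
  have hπp : 0 < Real.pi ^ ((d:ℝ)/2) := Real.rpow_pos_of_pos hπ _
  have h2β : (0:ℝ) < 2*β := by linarith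
  have h2βp : 0 < (2*β) ^ ((d:ℝ)/2) := Real.rpow_pos_of_pos h2β _
  have h2d : (0:ℝ) < 2*((d:ℝ)+1) := by linarith
  have h2dp : 0 < (2*((d:ℝ)+1)) ^ ((d:ℝ)/2) := Real.rpow_pos_of_pos h2d _
  have hApow : (0:ℝ) < A ^ (d-1) := pow_pos hA _
  -- the integral lower bound
  have hI : 2 * Real.exp (T / 2 - 2 * A ^ 2)
      ≤ ∫ s in Set.Iic (T - 4 * A ^ 2), (1 - s / (2 * β)) ^ (-β) := by
    have := integral_lb β (T - 4*A^2) hβ1 (by linarith)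
    rwa [show (T - 4*A^2)/2 = T/2 - 2*A^2 by ring] at this
  -- key gamma inequality, multiplied up
  have hkey := key_gamma d hd β hβ
  have hmul : (2*((d:ℝ)+1)) ^ ((d:ℝ)/2) * (β/((d:ℝ)+1)) ^ ((d:ℝ)/2)
      = (2*β) ^ ((d:ℝ)/2) := by
    rw [← Real.mul_rpow h2d.le (by positivity)]
    congr 1
    field_simp
  have hkey2 : (2*β) ^ ((d:ℝ)/2) * Real.Gamma (β - (d:ℝ)/2)
      < (2*((d:ℝ)+1)) ^ ((d:ℝ)/2) * (2 * Real.Gamma β) := by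
    have := mul_lt_mul_of_pos_left hkey h2dp
    calc (2*β) ^ ((d:ℝ)/2) * Real.Gamma (β - (d:ℝ)/2)
        = (2*((d:ℝ)+1)) ^ ((d:ℝ)/2) *
          ((β/((d:ℝ)+1)) ^ ((d:ℝ)/2) * Real.Gamma (β - (d:ℝ)/2)) := by
          rw [← mul_assoc, hmul]
      _ < (2*((d:ℝ)+1)) ^ ((d:ℝ)/2) * (2 * Real.Gamma β) := this
  -- rewrite pi power
  have hπpow : Real.pi ^ (((d:ℝ)-1)/2)
      = Real.pi ^ ((d:ℝ)/2) / Real.sqrt Real.pi := by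
    rw [Real.sqrt_eq_rpow, ← Real.rpow_sub hπ]
    congr 1
    ring
  -- main constant inequality
  have main : A ^ (d - 1) /
        ((2 * ((d : ℝ) + 1)) ^ ((d : ℝ) / 2) * Real.sqrt Real.pi *
          Real.Gamma (((d : ℝ) + 1) / 2))
      < 2 * (cPrime d β / (2 * β) ^ ((d : ℝ) / 2) *
          (Real.pi ^ (((d : ℝ) - 1) / 2) / Real.Gamma (((d : ℝ) + 1) / 2)) *
          A ^ (d - 1)) := by
    unfold cPrime
    rw [hπpow]
    revert hkey2 h2βp h2dp hπp hsπ hΓp hGm hGβ hApow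
    generalize (2 * ((d:ℝ) + 1)) ^ ((d : ℝ) / 2) = P1
    generalize (2 * β) ^ ((d : ℝ) / 2) = P2
    generalize Real.pi ^ ((d : ℝ) / 2) = Pp
    generalize Real.sqrt Real.pi = Sπ
    generalize Real.Gamma (((d : ℝ) + 1) / 2) = G1
    generalize Real.Gamma (β - (d : ℝ) / 2) = G2
    generalize Real.Gamma β = G3
    generalize A ^ (d - 1) = Ap
    intro hπp hsπ hΓp hGm hGβ h2βp h2dp hApow hkey2
    rw [div_lt_iff₀ (by positivity)]
    have h := mul_lt_mul_of_pos_left hkey2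
      (show 0 < Ap * Sπ * G1 * Pp by positivity)
    rw [show 2 * (G3 / (Pp * G2) / P2 * (Pp / Sπ / G1) * Ap) * (P1 * Sπ * G1)
        = (Ap * Sπ * G1 * Pp * (P1 * (2 * G3))) / (Pp * G2 * P2 * Sπ * G1) by
          field_simp]
    rw [lt_div_iff₀ (by positivity)]
    nlinarith [h]
  -- assemble
  have hE : 0 < Real.exp (T / 2 - 2 * A ^ 2) := Real.exp_pos _
  have hCL : 0 < cPrime d β / (2 * β) ^ ((d : ℝ) / 2) *
          (Real.pi ^ (((d : ℝ) - 1) / 2) / Real.Gamma (((d : ℝ) + 1) / 2)) *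
          A ^ (d - 1) := by
    have hcP : 0 < cPrime d β := div_pos hGβ (mul_pos hπp hGm)
    positivity
  calc A ^ (d - 1) /
        ((2 * ((d : ℝ) + 1)) ^ ((d : ℝ) / 2) * Real.sqrt Real.pi *
          Real.Gamma (((d : ℝ) + 1) / 2)) * Real.exp (T / 2 - 2 * A ^ 2)
      < 2 * (cPrime d β / (2 * β) ^ ((d : ℝ) / 2) *
          (Real.pi ^ (((d : ℝ) - 1) / 2) / Real.Gamma (((d : ℝ) + 1) / 2)) *
          A ^ (d - 1)) * Real.exp (T / 2 - 2 * A ^ 2) :=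
        mul_lt_mul_of_pos_right main hE
    _ = (cPrime d β / (2 * β) ^ ((d : ℝ) / 2) *
          (Real.pi ^ (((d : ℝ) - 1) / 2) / Real.Gamma (((d : ℝ) + 1) / 2)) *
          A ^ (d - 1)) * (2 * Real.exp (T / 2 - 2 * A ^ 2)) := by ring
    _ ≤ _ := mul_le_mul_of_nonneg_left hI hCL.le
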